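/- Let A be an n×n symmetrizable generalized Cartan matrix with Weyl group W acting on ℚ^n, and let J_1, …, J_t be the vertex sets of the connected components of the simply laced skeleton of A. For each s, let Φ_{J_s} = ⋃_{j ∈ J_s} W·e_j. Then the sets Φ_{J_1}, …, Φ_{J_t} are pairwise disjoint and their union is the set Φ = ⋃_{i=1}^n W·e_i of all real roots. -/

import Mathlib

/-- An integer matrix is a generalized Cartan matrix (GCM). -/
def IsGCM {ι : Type} (A : Matrix ι ι ℤ) : Prop :=
  (∀ i, A i i = 2) ∧ (∀ i j, i ≠ j → A i j ≤ 0) ∧ (∀ i j, A i j = 0 → A j i = 0)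

/-- A GCM is symmetrizable if there are nonzero rationals `d i` with
`d i * A i j = d j * A j i` for all `i, j`. -/
def IsSymmetrizable {ι : Type} (A : Matrix ι ι ℤ) : Prop :=
  ∃ d : ι → ℚ, (∀ i, d i ≠ 0) ∧ ∀ i j, d i * (A i j : ℚ) = d j * (A j i : ℚ)

/-- The Weyl group of an `n × n` GCM `A`: the subgroup of linear automorphisms of `ℚ^n`
generated by the simple reflections `s i`, where `s i (e j) = e j - A i j • e i`. -/
def weylGroup {n : ℕ} (A : Matrix (Fin n) (Fin n) ℤ) :
    Subgroup ((Fin n → ℚ) ≃ₗ[ℚ] (Fin n → ℚ)) :=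
  Subgroup.closure {w | ∃ i, ∀ j, w (Pi.single j 1) =
    (Pi.single j 1 : Fin n → ℚ) - (A i j : ℚ) • (Pi.single i 1 : Fin n → ℚ)}

/-- The orbit of the simple root `e i` under the Weyl group of `A`. -/
def weylOrbit {n : ℕ} (A : Matrix (Fin n) (Fin n) ℤ) (i : Fin n) : Set (Fin n → ℚ) :=
  {v | ∃ w ∈ weylGroup A, w (Pi.single i 1) = v}

/-- The simply laced skeleton of `A`: the simple graph with `i` adjacent to `j` iff
`i ≠ j` and `A i j = -1 = A j i`. -/
def skeleton {n : ℕ} (A : Matrix (Fin n) (Fin n) ℤ) : SimpleGraph (Fin n) where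
  Adj i j := i ≠ j ∧ A i j = -1 ∧ A j i = -1
  symm := by constructor; intro i j h; exact ⟨h.1.symm, h.2.2, h.2.1⟩
  loopless := by constructor; intro i h; exact h.1 rfl

namespace RRD

open CoxeterSystem

variable {n : ℕ}

/-- shorthand for the standard basis vector -/
noncomputable def ee (i : Fin n) : Fin n → ℚ := Pi.single i 1

lemma ee_apply (i k : Fin n) : ee i k = if k = i then 1 else 0 := by
  simp [ee, Pi.single_apply]

/-- the linear functional `v ↦ ∑ l, A i l * v l` -/
noncomputable def fA (A : Matrix (Fin n) (Fin n) ℤ) (i : Fin n) : (Fin n → ℚ) →ₗ[ℚ] ℚ where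
  toFun v := ∑ l, (A i l : ℚ) * v l
  map_add' u v := by simp [mul_add, Finset.sum_add_distrib]
  map_smul' c v := by simp [Finset.mul_sum]; ring_nf; simp [mul_assoc, mul_comm, mul_left_comm]

lemma fA_apply (A : Matrix (Fin n) (Fin n) ℤ) (i : Fin n) (v : Fin n → ℚ) :
    fA A i v = ∑ l, (A i l : ℚ) * v l := rfl

lemma fA_ee (A : Matrix (Fin n) (Fin n) ℤ) (i l : Fin n) : fA A i (ee l) = A i l := by
  rw [fA_apply]
  rw [Finset.sum_eq_single l]
  · simp [ee]
  · intro b _ hb; simp [ee_apply, hb]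
  · intro h; exact absurd (Finset.mem_univ l) h

/-- the simple reflection as a linear map -/
noncomputable def sigL (A : Matrix (Fin n) (Fin n) ℤ) (i : Fin n) :
    (Fin n → ℚ) →ₗ[ℚ] (Fin n → ℚ) :=
  LinearMap.id - (fA A i).smulRight (ee i)

lemma sigL_apply (A : Matrix (Fin n) (Fin n) ℤ) (i : Fin n) (v : Fin n → ℚ) :
    sigL A i v = v - fA A i v • ee i := rfl

lemma sigL_invol (A : Matrix (Fin n) (Fin n) ℤ) (h2 : ∀ i, A i i = 2) (i : Fin n) :
    Function.Involutive (sigL A i) := by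
  intro v
  have hAii : ((A i i : ℤ) : ℚ) = 2 := by rw [h2 i]; norm_num
  simp only [sigL_apply, map_sub, map_smul, fA_ee, hAii, smul_eq_mul]
  module

/-- the simple reflection as a linear equivalence -/
noncomputable def sig (A : Matrix (Fin n) (Fin n) ℤ) (h2 : ∀ i, A i i = 2) (i : Fin n) :
    (Fin n → ℚ) ≃ₗ[ℚ] (Fin n → ℚ) :=
  LinearEquiv.ofInvolutive (sigL A i) (sigL_invol A h2 i)

lemma sig_apply (A : Matrix (Fin n) (Fin n) ℤ) (h2 : ∀ i, A i i = 2) (i : Fin n)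
    (v : Fin n → ℚ) : sig A h2 i v = v - fA A i v • ee i := rfl

lemma sig_ee (A : Matrix (Fin n) (Fin n) ℤ) (h2 : ∀ i, A i i = 2) (i l : Fin n) :
    sig A h2 i (ee l) = ee l - (A i l : ℚ) • ee i := by
  rw [sig_apply, fA_ee]

lemma mul_apply' (f g : (Fin n → ℚ) ≃ₗ[ℚ] (Fin n → ℚ)) (v : Fin n → ℚ) :
    (f * g) v = f (g v) := rfl

lemma one_apply' (v : Fin n → ℚ) : (1 : (Fin n → ℚ) ≃ₗ[ℚ] (Fin n → ℚ)) v = v := rfl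

lemma genset_eq (A : Matrix (Fin n) (Fin n) ℤ) (h2 : ∀ i, A i i = 2) :
    {w : (Fin n → ℚ) ≃ₗ[ℚ] (Fin n → ℚ) | ∃ i, ∀ j, w (Pi.single j 1) =
      (Pi.single j 1 : Fin n → ℚ) - (A i j : ℚ) • (Pi.single i 1 : Fin n → ℚ)}
    = Set.range (sig A h2) := by
  ext w
  constructor
  · rintro ⟨i, hi⟩
    refine ⟨i, ?_⟩
    symm
    apply LinearEquiv.toLinearMap_injective
    apply LinearMap.pi_ext
    intro j x
    have hx : (Pi.single j x : Fin n → ℚ) = x • (Pi.single j 1 : Fin n → ℚ) := by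
      funext k
      simp [Pi.single_apply]
    rw [hx]
    simp only [LinearEquiv.coe_coe, map_smul]
    rw [hi j]
    have h := sig_ee A h2 i j
    unfold RRD.ee at h
    rw [h]
  · rintro ⟨i, rfl⟩
    exact ⟨i, fun j => sig_ee A h2 i j⟩

lemma weylGroup_eq (A : Matrix (Fin n) (Fin n) ℤ) (h2 : ∀ i, A i i = 2) :
    weylGroup A = Subgroup.closure (Set.range (sig A h2)) := by
  rw [weylGroup, genset_eq A h2]


section Coxeter

variable (A : Matrix (Fin n) (Fin n) ℤ)

/-- order of `s i * s j` from the product of Cartan entries -/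
def mOf (c : ℤ) : ℕ :=
  if c = 0 then 2 else if c = 1 then 3 else if c = 2 then 4 else if c = 3 then 6 else 0

/-- the Coxeter matrix associated to a GCM -/
def CM : CoxeterMatrix (Fin n) where
  M := Matrix.of fun i j => if i = j then 1 else mOf (A i j * A j i)
  isSymm := by
    unfold Matrix.IsSymm
    ext i j
    simp only [Matrix.transpose_apply, Matrix.of_apply]
    by_cases h : i = j
    · subst h; simp
    · simp only [h, Ne.symm h, if_false, mul_comm]
  diagonal i := by simp
  off_diagonal i j h := by
    simp only [Matrix.of_apply, h, if_false]
    unfold mOf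
    split_ifs <;> omega

lemma CM_apply_ne {i j : Fin n} (hij : i ≠ j) : CM A i j = mOf (A i j * A j i) := by
  show (Matrix.of fun i j => if i = j then 1 else mOf (A i j * A j i)) i j = _
  simp [hij]

lemma CM_apply_diag (i : Fin n) : CM A i i = 1 := by
  show (Matrix.of fun i j => if i = j then 1 else mOf (A i j * A j i)) i i = _
  simp

lemma gcm_cases (hA : IsGCM A) {i j : Fin n} (hij : i ≠ j) :
    (A i j = 0 ∧ A j i = 0) ∨ (A i j = -1 ∧ A j i = -1) ∨
    (A i j = -1 ∧ A j i = -2) ∨ (A i j = -2 ∧ A j i = -1) ∨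
    (A i j = -1 ∧ A j i = -3) ∨ (A i j = -3 ∧ A j i = -1) ∨
    (A i j ≤ -1 ∧ A j i ≤ -1 ∧ 4 ≤ A i j * A j i) := by
  have ha : A i j ≤ 0 := hA.2.1 i j hij
  have hb : A j i ≤ 0 := hA.2.1 j i (Ne.symm hij)
  by_cases ha0 : A i j = 0
  · exact Or.inl ⟨ha0, hA.2.2 i j ha0⟩
  by_cases hb0 : A j i = 0
  · exact Or.inl ⟨hA.2.2 j i hb0, hb0⟩
  have ha1 : A i j ≤ -1 := by omega
  have hb1 : A j i ≤ -1 := by omega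
  have hp1 : 1 ≤ A i j * A j i := by nlinarith
  by_cases h4 : 4 ≤ A i j * A j i
  · exact Or.inr (Or.inr (Or.inr (Or.inr (Or.inr (Or.inr ⟨ha1, hb1, h4⟩)))))
  have hA3 : -3 ≤ A i j := by nlinarith
  have hB3 : -3 ≤ A j i := by nlinarith
  interval_cases h : A i j <;> interval_cases h' : A j i <;> omega

variable (h2 : ∀ i, A i i = 2)

lemma step_j (i j : Fin n) (v : Fin n → ℚ) (x y : ℚ) :
    sig A h2 j (v - x • ee i - y • ee j)
      = v - x • ee i - (fA A j v - x * (A j i : ℚ) - y) • ee j := by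
  rw [sig_apply]
  have hjj : ((A j j : ℤ) : ℚ) = 2 := by rw [h2 j]; norm_num
  have hF : fA A j (v - x • ee i - y • ee j)
      = fA A j v - x * (A j i : ℚ) - 2 * y := by
    simp only [map_sub, map_smul, fA_ee, smul_eq_mul, hjj]
    ring
  rw [hF]
  module

lemma step_i (i j : Fin n) (v : Fin n → ℚ) (x y : ℚ) :
    sig A h2 i (v - x • ee i - y • ee j)
      = v - (fA A i v - y * (A i j : ℚ) - x) • ee i - y • ee j := by
  rw [sig_apply]
  have hii : ((A i i : ℤ) : ℚ) = 2 := by rw [h2 i]; norm_num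
  have hF : fA A i (v - x • ee i - y • ee j)
      = fA A i v - 2 * x - y * (A i j : ℚ) := by
    simp only [map_sub, map_smul, fA_ee, smul_eq_mul, hii]
    ring
  rw [hF]
  have : fA A i v - 2 * x - y * (A i j : ℚ) = (fA A i v - y * (A i j : ℚ) - x) - x := by ring
  rw [this]
  module

lemma sig_sq (i : Fin n) : sig A h2 i * sig A h2 i = 1 :=
  LinearEquiv.ext fun v => sigL_invol A h2 i v

lemma rel_pow (hA : IsGCM A) (i j : Fin n) (hij : i ≠ j) :
    (sig A hA.1 i * sig A hA.1 j) ^ (CM A i j) = 1 := by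
  rcases gcm_cases A hA hij with ⟨ha,hb⟩|⟨ha,hb⟩|⟨ha,hb⟩|⟨ha,hb⟩|⟨ha,hb⟩|⟨ha,hb⟩|⟨ha,hb,hp⟩
  · have hm : CM A i j = 2 := by rw [CM_apply_ne A hij, ha, hb]; rfl
    rw [hm]
    refine LinearEquiv.ext fun v => ?_
    have haq : ((A i j : ℤ) : ℚ) = 0 := by rw [ha]; norm_num
    have hbq : ((A j i : ℤ) : ℚ) = 0 := by rw [hb]; norm_num
    simp only [pow_succ, pow_zero, one_mul, mul_apply', one_apply']
    conv_lhs => rw [show v = v - (0:ℚ) • ee i - (0:ℚ) • ee j by module]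
    rw [step_j A hA.1 i j, step_i A hA.1 i j, step_j A hA.1 i j, step_i A hA.1 i j]
    rw [haq, hbq]
    module
  · have hm : CM A i j = 3 := by rw [CM_apply_ne A hij, ha, hb]; rfl
    rw [hm]
    refine LinearEquiv.ext fun v => ?_
    have haq : ((A i j : ℤ) : ℚ) = -1 := by rw [ha]; norm_num
    have hbq : ((A j i : ℤ) : ℚ) = -1 := by rw [hb]; norm_num
    simp only [pow_succ, pow_zero, one_mul, mul_apply', one_apply']
    conv_lhs => rw [show v = v - (0:ℚ) • ee i - (0:ℚ) • ee j by module]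
    rw [step_j A hA.1 i j, step_i A hA.1 i j, step_j A hA.1 i j, step_i A hA.1 i j, step_j A hA.1 i j, step_i A hA.1 i j]
    rw [haq, hbq]
    module
  · have hm : CM A i j = 4 := by rw [CM_apply_ne A hij, ha, hb]; rfl
    rw [hm]
    refine LinearEquiv.ext fun v => ?_
    have haq : ((A i j : ℤ) : ℚ) = -1 := by rw [ha]; norm_num
    have hbq : ((A j i : ℤ) : ℚ) = -2 := by rw [hb]; norm_num
    simp only [pow_succ, pow_zero, one_mul, mul_apply', one_apply']
    conv_lhs => rw [show v = v - (0:ℚ) • ee i - (0:ℚ) • ee j by module]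
    rw [step_j A hA.1 i j, step_i A hA.1 i j, step_j A hA.1 i j, step_i A hA.1 i j, step_j A hA.1 i j, step_i A hA.1 i j, step_j A hA.1 i j, step_i A hA.1 i j]
    rw [haq, hbq]
    module
  · have hm : CM A i j = 4 := by rw [CM_apply_ne A hij, ha, hb]; rfl
    rw [hm]
    refine LinearEquiv.ext fun v => ?_
    have haq : ((A i j : ℤ) : ℚ) = -2 := by rw [ha]; norm_num
    have hbq : ((A j i : ℤ) : ℚ) = -1 := by rw [hb]; norm_num
    simp only [pow_succ, pow_zero, one_mul, mul_apply', one_apply']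
    conv_lhs => rw [show v = v - (0:ℚ) • ee i - (0:ℚ) • ee j by module]
    rw [step_j A hA.1 i j, step_i A hA.1 i j, step_j A hA.1 i j, step_i A hA.1 i j, step_j A hA.1 i j, step_i A hA.1 i j, step_j A hA.1 i j, step_i A hA.1 i j]
    rw [haq, hbq]
    module
  · have hm : CM A i j = 6 := by rw [CM_apply_ne A hij, ha, hb]; rfl
    rw [hm]
    refine LinearEquiv.ext fun v => ?_
    have haq : ((A i j : ℤ) : ℚ) = -1 := by rw [ha]; norm_num
    have hbq : ((A j i : ℤ) : ℚ) = -3 := by rw [hb]; norm_num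
    simp only [pow_succ, pow_zero, one_mul, mul_apply', one_apply']
    conv_lhs => rw [show v = v - (0:ℚ) • ee i - (0:ℚ) • ee j by module]
    rw [step_j A hA.1 i j, step_i A hA.1 i j, step_j A hA.1 i j, step_i A hA.1 i j, step_j A hA.1 i j, step_i A hA.1 i j, step_j A hA.1 i j, step_i A hA.1 i j, step_j A hA.1 i j, step_i A hA.1 i j, step_j A hA.1 i j, step_i A hA.1 i j]
    rw [haq, hbq]
    module
  · have hm : CM A i j = 6 := by rw [CM_apply_ne A hij, ha, hb]; rfl
    rw [hm]
    refine LinearEquiv.ext fun v => ?_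
    have haq : ((A i j : ℤ) : ℚ) = -3 := by rw [ha]; norm_num
    have hbq : ((A j i : ℤ) : ℚ) = -1 := by rw [hb]; norm_num
    simp only [pow_succ, pow_zero, one_mul, mul_apply', one_apply']
    conv_lhs => rw [show v = v - (0:ℚ) • ee i - (0:ℚ) • ee j by module]
    rw [step_j A hA.1 i j, step_i A hA.1 i j, step_j A hA.1 i j, step_i A hA.1 i j, step_j A hA.1 i j, step_i A hA.1 i j, step_j A hA.1 i j, step_i A hA.1 i j, step_j A hA.1 i j, step_i A hA.1 i j, step_j A hA.1 i j, step_i A hA.1 i j]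
    rw [haq, hbq]
    module
  · have hm : CM A i j = 0 := by
      rw [CM_apply_ne A hij]
      unfold mOf
      split_ifs <;> omega
    rw [hm, pow_zero]

theorem lift_ok (hA : IsGCM A) : CoxeterMatrix.IsLiftable (CM A) (sig A hA.1) := by
  intro i j
  by_cases hij : i = j
  · subst hij; rw [CM_apply_diag, pow_one]; exact sig_sq A hA.1 i
  · exact rel_pow A hA i j hij


end Coxeter

/-! ### the abstract Coxeter group and the lifted homomorphism -/

/-- the Coxeter system of the Coxeter matrix of `A` -/
def csys (A : Matrix (Fin n) (Fin n) ℤ) : CoxeterSystem (CM A) (CM A).Group :=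
  (CM A).toCoxeterSystem

/-- the canonical homomorphism from the abstract Coxeter group to `GL(ℚ^n)` -/
noncomputable def phi (A : Matrix (Fin n) (Fin n) ℤ) (hA : IsGCM A) :
    (CM A).Group →* ((Fin n → ℚ) ≃ₗ[ℚ] (Fin n → ℚ)) :=
  (csys A).lift ⟨sig A hA.1, lift_ok A hA⟩

lemma phi_simple (A : Matrix (Fin n) (Fin n) ℤ) (hA : IsGCM A) (i : Fin n) :
    phi A hA ((csys A).simple i) = sig A hA.1 i :=
  (csys A).lift_apply_simple (lift_ok A hA) i

lemma weyl_le_range (A : Matrix (Fin n) (Fin n) ℤ) (hA : IsGCM A) :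
    weylGroup A ≤ (phi A hA).range := by
  rw [weylGroup_eq A hA.1]
  apply (Subgroup.closure_le _).mpr
  rintro x ⟨i, rfl⟩
  exact ⟨(csys A).simple i, phi_simple A hA i⟩

/-! ### peeling off a dihedral tail -/

lemma peel {B : Type*} {W : Type*} [Group W] {M : CoxeterMatrix B} (cs : CoxeterSystem M W) :
    ∀ (r : ℕ) (w : W), cs.length w ≤ r → ∀ i j : B, ∃ (v : W) (ω : List B),
    (∀ k ∈ ω, k = i ∨ k = j) ∧ w = v * cs.wordProd ω ∧
    cs.length w = cs.length v + ω.length ∧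
    ¬cs.IsRightDescent v i ∧ ¬cs.IsRightDescent v j := by
  intro r
  induction r with
  | zero =>
    intro w hw i j
    refine ⟨w, [], by simp, by simp, by simp, ?_, ?_⟩ <;>
    · intro hd
      unfold CoxeterSystem.IsRightDescent at hd
      omega
  | succ r ih =>
    intro w hw i j
    by_cases hdi : cs.IsRightDescent w i
    · have hstep : cs.length (w * cs.simple i) + 1 = cs.length w := by
        rcases cs.length_mul_simple w i with h | h
        · exfalso; unfold CoxeterSystem.IsRightDescent at hdi; omega
        · exact h
      obtain ⟨v, ω, hmem, hw', hlen, hvi, hvj⟩ :=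
        ih (w * cs.simple i) (by omega) i j
      refine ⟨v, ω ++ [i], ?_, ?_, ?_, hvi, hvj⟩
      · intro k hk
        rcases List.mem_append.mp hk with h | h
        · exact hmem k h
        · left; simpa using h
      · rw [cs.wordProd_append]
        have : cs.wordProd [i] = cs.simple i := by
          rw [show [i] = List.concat [] i by rfl, cs.wordProd_concat, cs.wordProd_nil, one_mul]
        rw [this, ← mul_assoc, ← hw', CoxeterSystem.simple_mul_simple_cancel_right]
      · rw [List.length_append]
        simp only [List.length_singleton]
        omega
    · by_cases hdj : cs.IsRightDescent w j
      · have hstep : cs.length (w * cs.simple j) + 1 = cs.length w := by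
          rcases cs.length_mul_simple w j with h | h
          · exfalso; unfold CoxeterSystem.IsRightDescent at hdj; omega
          · exact h
        obtain ⟨v, ω, hmem, hw', hlen, hvi, hvj⟩ :=
          ih (w * cs.simple j) (by omega) i j
        refine ⟨v, ω ++ [j], ?_, ?_, ?_, hvi, hvj⟩
        · intro k hk
          rcases List.mem_append.mp hk with h | h
          · exact hmem k h
          · right; simpa using h
        · rw [cs.wordProd_append]
          have : cs.wordProd [j] = cs.simple j := by
            rw [show [j] = List.concat [] j by rfl, cs.wordProd_concat, cs.wordProd_nil, one_mul]
          rw [this, ← mul_assoc, ← hw', CoxeterSystem.simple_mul_simple_cancel_right]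
        · rw [List.length_append]
          simp only [List.length_singleton]
          omega
      · exact ⟨w, [], by simp, by simp, by simp, hdi, hdj⟩

/-! ### rank-two positivity -/

/-- coefficients of the vectors obtained by alternately applying the two simple
reflections of a rank-two subsystem to a simple root -/
def posSeq (a b : ℚ) : ℕ → ℚ × ℚ
  | 0 => (1, 0)
  | t+1 =>
    if Even t then ((posSeq a b t).1, b * (posSeq a b t).1 - (posSeq a b t).2)
    else (a * (posSeq a b t).2 - (posSeq a b t).1, (posSeq a b t).2)

lemma posSeq_nonneg_infinite {a b : ℚ} (ha : 1 ≤ a) (hb : 1 ≤ b) (hab : 4 ≤ a * b) :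
    ∀ t, (0 < (posSeq a b t).1 ∧ 0 ≤ (posSeq a b t).2) ∧
      (Even t → 2 * (posSeq a b t).2 ≤ b * (posSeq a b t).1) ∧
      (¬Even t → b * (posSeq a b t).1 ≤ 2 * (posSeq a b t).2) := by
  intro t
  induction t with
  | zero =>
    refine ⟨⟨by norm_num [posSeq], by norm_num [posSeq]⟩, ?_, ?_⟩
    · intro _; norm_num [posSeq]; linarith
    · intro h; exact absurd Even.zero h
  | succ t ih =>
    obtain ⟨⟨hx, hy⟩, he, ho⟩ := ih
    by_cases ht : Even t
    · have hbd := he ht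
      have h1 : ¬ Even (t+1) := by simpa [Nat.even_add_one] using ht
      refine ⟨⟨?_, ?_⟩, ?_, ?_⟩
      · simp only [posSeq, ht, if_true]; exact hx
      · simp only [posSeq, ht, if_true]; nlinarith
      · intro h; exact absurd h h1
      · intro _; simp only [posSeq, ht, if_true]; nlinarith
    · have hbd := ho ht
      have h1 : Even (t+1) := by simpa [Nat.even_add_one] using ht
      have hy' : 0 < (posSeq a b t).2 := by nlinarith
      have hax : 0 < a * (posSeq a b t).2 - (posSeq a b t).1 := by
        nlinarith [mul_le_mul_of_nonneg_left hbd (by linarith : (0:ℚ) ≤ a),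
          mul_le_mul_of_nonneg_right hab (le_of_lt hx)]
      refine ⟨⟨?_, ?_⟩, ?_, ?_⟩
      · simp only [posSeq, ht, if_false]; exact hax
      · simp only [posSeq, ht, if_false]; exact hy
      · intro _
        simp only [posSeq, ht, if_false]
        nlinarith [mul_le_mul_of_nonneg_right hab (le_of_lt hy')]
      · intro h; exact absurd h1 h

/-! ### words in two letters -/

lemma dupfree_or_dup {γ : Type*} : ∀ ω : List γ,
    List.Chain' (· ≠ ·) ω ∨ ∃ (ω₁ : List γ) (k : γ) (ω₂ : List γ), ω = ω₁ ++ k :: k :: ω₂ := by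
  intro ω
  induction ω with
  | nil => left; exact List.isChain_nil
  | cons a ω' ih =>
    cases ω' with
    | nil => left; exact List.isChain_singleton _
    | cons b t =>
      by_cases hab : a = b
      · right; exact ⟨[], a, t, by rw [hab]; rfl⟩
      · rcases ih with hch | ⟨ω₁, k, ω₂, heq⟩
        · left; exact List.isChain_cons_cons.mpr ⟨hab, hch⟩
        · right; exact ⟨a :: ω₁, k, ω₂, by rw [heq]; rfl⟩

lemma chain_alt {i j : Fin n} (hij : i ≠ j) : ∀ ω : List (Fin n),
    (∀ k ∈ ω, k = i ∨ k = j) → List.Chain' (· ≠ ·) ω →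
    ω = CoxeterSystem.alternatingWord i j ω.length ∨
    ω = CoxeterSystem.alternatingWord j i ω.length := by
  intro ω
  induction ω with
  | nil => intro _ _; left; rfl
  | cons a ω' ih =>
    intro hmem hch
    cases ω' with
    | nil =>
      rcases hmem a (by simp) with rfl | rfl
      · right
        rw [show ([a] : List (Fin n)).length = 0 + 1 by rfl,
          CoxeterSystem.alternatingWord_succ']
        simp [CoxeterSystem.alternatingWord]
      · left
        rw [show ([a] : List (Fin n)).length = 0 + 1 by rfl,
          CoxeterSystem.alternatingWord_succ']
        simp [CoxeterSystem.alternatingWord]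
    | cons b t =>
      have hab : a ≠ b := (List.isChain_cons_cons.mp hch).1
      have hch' : List.Chain' (· ≠ ·) (b :: t) := (List.isChain_cons_cons.mp hch).2
      have hmem' : ∀ k ∈ b :: t, k = i ∨ k = j := fun k hk => hmem k (List.mem_cons_of_mem a hk)
      have ha' : a = i ∨ a = j := hmem a (by simp)
      rcases ih hmem' hch' with hc | hc
      · left
        have hlen : (b :: t).length = t.length + 1 := rfl
        rw [hlen, CoxeterSystem.alternatingWord_succ'] at hc
        have hb : b = if Even t.length then j else i := by
          have h' := congrArg List.head? hc
          simpa using h'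
        have hanew : a = if Even (t.length + 1) then j else i := by
          by_cases hev : Even t.length
          · simp only [hev, if_true] at hb
            have : ¬ Even (t.length + 1) := by simpa [Nat.even_add_one] using hev
            simp only [this, if_false]
            rcases ha' with rfl | rfl
            · rfl
            · exact absurd hb.symm hab
          · simp only [hev, if_false] at hb
            have : Even (t.length + 1) := by simpa [Nat.even_add_one] using hev
            simp only [this, if_true]
            rcases ha' with rfl | rfl
            · exact absurd hb.symm hab
            · rfl
        show a :: b :: t = CoxeterSystem.alternatingWord i j (t.length + 1 + 1)
        rw [CoxeterSystem.alternatingWord_succ', CoxeterSystem.alternatingWord_succ',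
          ← hanew, ← hc]
      · right
        have hlen : (b :: t).length = t.length + 1 := rfl
        rw [hlen, CoxeterSystem.alternatingWord_succ'] at hc
        have hb : b = if Even t.length then i else j := by
          have h' := congrArg List.head? hc
          simpa using h'
        have hanew : a = if Even (t.length + 1) then i else j := by
          by_cases hev : Even t.length
          · simp only [hev, if_true] at hb
            have : ¬ Even (t.length + 1) := by simpa [Nat.even_add_one] using hev
            simp only [this, if_false]
            rcases ha' with rfl | rfl
            · exact absurd hb.symm hab
            · rfl
          · simp only [hev, if_false] at hb
            have : Even (t.length + 1) := by simpa [Nat.even_add_one] using hev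
            simp only [this, if_true]
            rcases ha' with rfl | rfl
            · rfl
            · exact absurd hb.symm hab
        show a :: b :: t = CoxeterSystem.alternatingWord j i (t.length + 1 + 1)
        rw [CoxeterSystem.alternatingWord_succ', CoxeterSystem.alternatingWord_succ',
          ← hanew, ← hc]

lemma alt_suffix (i j : Fin n) : ∀ q m : ℕ, m ≤ q → ∃ pre : List (Fin n),
    CoxeterSystem.alternatingWord i j q = pre ++ CoxeterSystem.alternatingWord i j m := by
  intro q
  induction q with
  | zero =>
    intro m hm
    interval_cases m
    exact ⟨[], rfl⟩
  | succ q ih =>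
    intro m hm
    rcases Nat.eq_or_lt_of_le hm with rfl | hlt
    · exact ⟨[], by simp⟩
    · obtain ⟨pre, hp⟩ := ih m (by omega)
      refine ⟨(if Even q then j else i) :: pre, ?_⟩
      rw [CoxeterSystem.alternatingWord_succ', hp]
      rfl

lemma mem_alt (i j : Fin n) : ∀ (m : ℕ) (k : Fin n),
    k ∈ CoxeterSystem.alternatingWord i j m → k = i ∨ k = j := by
  intro m
  induction m with
  | zero => intro k hk; simp [CoxeterSystem.alternatingWord] at hk
  | succ m ih =>
    intro k hk
    rw [CoxeterSystem.alternatingWord_succ'] at hk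
    rcases List.mem_cons.mp hk with h | h
    · by_cases hev : Even m
      · simp only [hev, if_true] at h; right; exact h
      · simp only [hev, if_false] at h; left; exact h
    · exact ih k h

/-! ### the action on a simple root along an alternating word -/

lemma vec (A : Matrix (Fin n) (Fin n) ℤ) (hA : IsGCM A) (i j : Fin n) (hij : i ≠ j) (t : ℕ) :
    phi A hA ((csys A).wordProd (CoxeterSystem.alternatingWord i j t)) (ee i)
      = (posSeq (-(A i j : ℚ)) (-(A j i : ℚ)) t).1 • ee i
        + (posSeq (-(A i j : ℚ)) (-(A j i : ℚ)) t).2 • ee j := by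
  induction t with
  | zero =>
    show phi A hA ((csys A).wordProd []) (ee i) = _
    rw [(csys A).wordProd_nil, map_one, one_apply']
    simp only [posSeq]
    module
  | succ t ih =>
    rw [CoxeterSystem.alternatingWord_succ', (csys A).wordProd_cons, map_mul, mul_apply', ih]
    by_cases ht : Even t
    · simp only [ht, if_true]
      rw [phi_simple, sig_apply]
      have hf : fA A j ((posSeq (-(A i j : ℚ)) (-(A j i : ℚ)) t).1 • ee i
          + (posSeq (-(A i j : ℚ)) (-(A j i : ℚ)) t).2 • ee j)
          = (posSeq (-(A i j : ℚ)) (-(A j i : ℚ)) t).1 * (A j i : ℚ)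
            + (posSeq (-(A i j : ℚ)) (-(A j i : ℚ)) t).2 * 2 := by
        have hjj : ((A j j : ℤ) : ℚ) = 2 := by rw [hA.1 j]; norm_num
        simp only [map_add, map_smul, fA_ee, smul_eq_mul, hjj]
      rw [hf]
      simp only [posSeq, ht, if_true]
      module
    · simp only [ht, if_false]
      rw [phi_simple, sig_apply]
      have hf : fA A i ((posSeq (-(A i j : ℚ)) (-(A j i : ℚ)) t).1 • ee i
          + (posSeq (-(A i j : ℚ)) (-(A j i : ℚ)) t).2 • ee j)
          = (posSeq (-(A i j : ℚ)) (-(A j i : ℚ)) t).1 * 2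
            + (posSeq (-(A i j : ℚ)) (-(A j i : ℚ)) t).2 * (A i j : ℚ) := by
        have hii : ((A i i : ℤ) : ℚ) = 2 := by rw [hA.1 i]; norm_num
        simp only [map_add, map_smul, fA_ee, smul_eq_mul, hii]
      rw [hf]
      simp only [posSeq, ht, if_false]
      module

lemma posMaster (A : Matrix (Fin n) (Fin n) ℤ) (hA : IsGCM A) (i j : Fin n) (hij : i ≠ j)
    (t : ℕ) (h : CM A i j = 0 ∨ t < CM A i j) :
    0 ≤ (posSeq (-(A i j : ℚ)) (-(A j i : ℚ)) t).1
      ∧ 0 ≤ (posSeq (-(A i j : ℚ)) (-(A j i : ℚ)) t).2 := by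
  have hcm := CM_apply_ne A hij
  rcases gcm_cases A hA hij with ⟨ha,hb⟩|⟨ha,hb⟩|⟨ha,hb⟩|⟨ha,hb⟩|⟨ha,hb⟩|⟨ha,hb⟩|⟨ha,hb,hp⟩
  · rw [ha, hb] at hcm
    push_cast [ha, hb]
    have hm : CM A i j = 2 := by rw [hcm]; rfl
    rw [hm] at h
    have ht : t < 2 := by omega
    interval_cases t <;> norm_num [posSeq, Nat.even_iff]
  · rw [ha, hb] at hcm
    push_cast [ha, hb]
    have hm : CM A i j = 3 := by rw [hcm]; rfl
    rw [hm] at h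
    have ht : t < 3 := by omega
    interval_cases t <;> norm_num [posSeq, Nat.even_iff]
  · rw [ha, hb] at hcm
    push_cast [ha, hb]
    have hm : CM A i j = 4 := by rw [hcm]; rfl
    rw [hm] at h
    have ht : t < 4 := by omega
    interval_cases t <;> norm_num [posSeq, Nat.even_iff]
  · rw [ha, hb] at hcm
    push_cast [ha, hb]
    have hm : CM A i j = 4 := by rw [hcm]; rfl
    rw [hm] at h
    have ht : t < 4 := by omega
    interval_cases t <;> norm_num [posSeq, Nat.even_iff]
  · rw [ha, hb] at hcm
    push_cast [ha, hb]
    have hm : CM A i j = 6 := by rw [hcm]; rfl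
    rw [hm] at h
    have ht : t < 6 := by omega
    interval_cases t <;> norm_num [posSeq, Nat.even_iff]
  · rw [ha, hb] at hcm
    push_cast [ha, hb]
    have hm : CM A i j = 6 := by rw [hcm]; rfl
    rw [hm] at h
    have ht : t < 6 := by omega
    interval_cases t <;> norm_num [posSeq, Nat.even_iff]
  · have ha' : (1 : ℚ) ≤ -(A i j : ℚ) := by
      have : (A i j : ℚ) ≤ -1 := by exact_mod_cast ha
      linarith
    have hb' : (1 : ℚ) ≤ -(A j i : ℚ) := by
      have : (A j i : ℚ) ≤ -1 := by exact_mod_cast hb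
      linarith
    have hab' : (4 : ℚ) ≤ (-(A i j : ℚ)) * (-(A j i : ℚ)) := by
      have : (4 : ℚ) ≤ ((A i j * A j i : ℤ) : ℚ) := by exact_mod_cast hp
      push_cast at this
      nlinarith
    obtain ⟨⟨h1, h2⟩, _, _⟩ := posSeq_nonneg_infinite ha' hb' hab' t
    exact ⟨le_of_lt h1, h2⟩

/-! ### the key rank-two dichotomy for two-letter words -/

lemma R2 (A : Matrix (Fin n) (Fin n) ℤ) (hA : IsGCM A) (i j : Fin n) (hij : i ≠ j) :
    ∀ (q : ℕ) (ω : List (Fin n)), ω.length = q → (∀ k ∈ ω, k = i ∨ k = j) →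
    (∃ x y : ℚ, 0 ≤ x ∧ 0 ≤ y ∧
      phi A hA ((csys A).wordProd ω) (ee i) = x • ee i + y • ee j) ∨
    (∃ ω' : List (Fin n), ω'.length + 1 ≤ q ∧
      (csys A).wordProd ω' = (csys A).wordProd ω * (csys A).simple i) := by
  intro q
  induction q using Nat.strong_induction_on with
  | _ q IHq =>
  intro ω hlen hmem
  rcases dupfree_or_dup ω with hch | ⟨ω₁, k, ω₂, rfl⟩
  · rcases chain_alt hij ω hmem hch with heq | heq
    · rw [hlen] at heq
      by_cases hm0 : CM A i j = 0 ∨ q < CM A i j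
      · left
        obtain ⟨hx, hy⟩ := posMaster A hA i j hij q hm0
        exact ⟨_, _, hx, hy, by rw [heq]; exact vec A hA i j hij q⟩
      · push_neg at hm0
        obtain ⟨hmne, hmle⟩ := hm0
        right
        obtain ⟨pre, hp⟩ := alt_suffix i j q (CM A i j) hmle
        have hm1 : 1 ≤ CM A i j := by omega
        have hbraid : (csys A).wordProd (CoxeterSystem.alternatingWord i j (CM A i j))
            = (csys A).wordProd (CoxeterSystem.alternatingWord j i (CM A i j)) := by
          have hle : CM A i j ≤ (CM A) i j * 2 := by omega
          have h' := (csys A).prod_alternatingWord_eq_prod_alternatingWord_sub i j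
            (CM A i j) hle
          rwa [show (CM A) i j * 2 - CM A i j = CM A i j by omega] at h'
        have hm' : CM A i j - 1 + 1 = CM A i j := by omega
        have hsplit : CoxeterSystem.alternatingWord j i (CM A i j)
            = (CoxeterSystem.alternatingWord i j (CM A i j - 1)).concat i := by
          conv_lhs => rw [← hm']
          rw [CoxeterSystem.alternatingWord_succ]
        refine ⟨pre ++ CoxeterSystem.alternatingWord i j (CM A i j - 1), ?_, ?_⟩
        · have h1 : (CoxeterSystem.alternatingWord i j q).length = q :=
            CoxeterSystem.length_alternatingWord i j q
          have h2 : (CoxeterSystem.alternatingWord i j (CM A i j)).length = CM A i j :=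
            CoxeterSystem.length_alternatingWord i j (CM A i j)
          have h3 : (CoxeterSystem.alternatingWord i j (CM A i j - 1)).length
              = CM A i j - 1 := CoxeterSystem.length_alternatingWord i j _
          have h4 := congrArg List.length hp
          rw [h1, List.length_append, h2] at h4
          rw [List.length_append, h3]
          omega
        · rw [heq, hp, (csys A).wordProd_append, (csys A).wordProd_append, hbraid, hsplit,
            (csys A).wordProd_concat, ← mul_assoc,
            CoxeterSystem.simple_mul_simple_cancel_right]
    · rw [hlen] at heq
      cases q with
      | zero =>
        left
        refine ⟨1, 0, by norm_num, by norm_num, ?_⟩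
        have : ω = [] := List.length_eq_zero_iff.mp hlen
        rw [this, (csys A).wordProd_nil, map_one, one_apply']
        module
      | succ q' =>
        right
        refine ⟨CoxeterSystem.alternatingWord i j q',
          by rw [CoxeterSystem.length_alternatingWord], ?_⟩
        rw [heq, CoxeterSystem.alternatingWord_succ, (csys A).wordProd_concat,
          CoxeterSystem.simple_mul_simple_cancel_right]
  · have hq : ω₁.length + ω₂.length + 2 = q := by
      rw [← hlen]
      simp only [List.length_append, List.length_cons]
      omega
    have hπ : (csys A).wordProd (ω₁ ++ k :: k :: ω₂) = (csys A).wordProd (ω₁ ++ ω₂) := by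
      rw [(csys A).wordProd_append, (csys A).wordProd_append, (csys A).wordProd_cons,
        (csys A).wordProd_cons, CoxeterSystem.simple_mul_simple_cancel_left]
    have hmem' : ∀ x ∈ ω₁ ++ ω₂, x = i ∨ x = j := by
      intro x hx
      apply hmem x
      simp only [List.mem_append, List.mem_cons] at hx ⊢
      tauto
    rcases IHq (ω₁.length + ω₂.length) (by omega) (ω₁ ++ ω₂) (by simp) hmem' with
      ⟨x, y, hx, hy, hv⟩ | ⟨ω', hl, he⟩
    · left; exact ⟨x, y, hx, hy, by rw [hπ]; exact hv⟩
    · right; exact ⟨ω', by omega, by rw [hπ]; exact he⟩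

/-! ### the positivity theorem -/

theorem posT (A : Matrix (Fin n) (Fin n) ℤ) (hA : IsGCM A) :
    ∀ (r : ℕ) (w : (CM A).Group), (csys A).length w ≤ r →
    ∀ i : Fin n, ¬(csys A).IsRightDescent w i → ∀ k, 0 ≤ phi A hA w (ee i) k := by
  intro r
  induction r using Nat.strong_induction_on with
  | _ r IH =>
  intro w hw i hdi k
  by_cases hw1 : w = 1
  · subst hw1
    rw [map_one, one_apply', ee_apply]
    split <;> norm_num
  · obtain ⟨j, hdj⟩ := (csys A).exists_rightDescent_of_ne_one hw1
    have hij : i ≠ j := fun h => hdi (h ▸ hdj)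
    obtain ⟨v, ω, hmem, hwv, hlen, hvi, hvj⟩ :=
      peel (csys A) ((csys A).length w) w le_rfl i j
    have hω : 1 ≤ ω.length := by
      rcases Nat.eq_zero_or_pos ω.length with h0 | h
      · exfalso
        have : ω = [] := List.length_eq_zero_iff.mp h0
        rw [this, (csys A).wordProd_nil, mul_one] at hwv
        rw [hwv] at hdj
        exact hvj hdj
      · exact h
    have hlw : 1 ≤ (csys A).length w := by
      by_contra h
      have : (csys A).length w = 0 := by omega
      exact hw1 ((csys A).length_eq_zero_iff.mp this)
    have hlv : (csys A).length v < r := by omega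
    rcases R2 A hA i j hij ω.length ω rfl hmem with ⟨x, y, hx, hy, hvec⟩ | ⟨ω', hl, he⟩
    · have hsplit : phi A hA w (ee i)
          = x • (phi A hA v (ee i)) + y • (phi A hA v (ee j)) := by
        rw [hwv, map_mul, mul_apply', hvec, map_add, map_smul, map_smul]
      rw [hsplit]
      have h1 := IH ((csys A).length v) hlv v le_rfl i hvi k
      have h2 := IH ((csys A).length v) hlv v le_rfl j hvj k
      simp only [Pi.add_apply, Pi.smul_apply, smul_eq_mul]
      exact add_nonneg (mul_nonneg hx h1) (mul_nonneg hy h2)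
    · exfalso
      have hle : (csys A).length (w * (csys A).simple i)
          ≤ (csys A).length v + ω'.length := by
        rw [hwv, mul_assoc, ← he]
        calc (csys A).length (v * (csys A).wordProd ω')
            ≤ (csys A).length v + (csys A).length ((csys A).wordProd ω') :=
              (csys A).length_mul_le v _
          _ ≤ (csys A).length v + ω'.length := by
              have := (csys A).length_wordProd_le ω'
              omega
      have hnd : ¬ (csys A).length (w * (csys A).simple i) < (csys A).length w := hdi
      omega

/-! ### faithfulness -/

theorem phi_ker (A : Matrix (Fin n) (Fin n) ℤ) (hA : IsGCM A) :
    ∀ w : (CM A).Group, phi A hA w = 1 → w = 1 := by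
  intro w hw1
  by_contra hne
  obtain ⟨j, hdj⟩ := (csys A).exists_rightDescent_of_ne_one hne
  set u := w * (csys A).simple j with hu
  have huw : u * (csys A).simple j = w := by
    rw [hu, CoxeterSystem.simple_mul_simple_cancel_right]
  have hdj' : (csys A).length u < (csys A).length w := hdj
  have hud : ¬(csys A).IsRightDescent u j := by
    intro hd
    unfold CoxeterSystem.IsRightDescent at hd
    rw [huw] at hd
    omega
  have hpos := posT A hA ((csys A).length u) u le_rfl j hud j
  have hjj : ((A j j : ℤ) : ℚ) = 2 := by rw [hA.1 j]; norm_num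
  have hs : sig A hA.1 j (ee j) = -(ee j) := by
    rw [sig_ee, hjj]
    module
  have hj : phi A hA w (ee j) = -(phi A hA u (ee j)) := by
    rw [← huw, map_mul, mul_apply', phi_simple, hs, map_neg]
  rw [hw1, one_apply'] at hj
  have h1 : ee j j = 1 := by rw [ee_apply]; simp
  have := congrFun hj j
  rw [h1] at this
  simp only [Pi.neg_apply] at this
  linarith

theorem phi_inj (A : Matrix (Fin n) (Fin n) ℤ) (hA : IsGCM A) :
    Function.Injective (phi A hA) := by
  intro x y h
  have h1 : phi A hA (x * y⁻¹) = 1 := by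
    rw [map_mul, map_inv, h, mul_inv_cancel]
  have := phi_ker A hA _ h1
  exact mul_inv_eq_one.mp this

/-! ### the invariant bilinear form -/

/-- the symmetrized bilinear form -/
noncomputable def Bf (A : Matrix (Fin n) (Fin n) ℤ) (d : Fin n → ℚ) (u v : Fin n → ℚ) : ℚ :=
  ∑ k, d k * u k * fA A k v

lemma Bf_sub_right (A : Matrix (Fin n) (Fin n) ℤ) (d : Fin n → ℚ) (u v w : Fin n → ℚ) (c : ℚ) :
    Bf A d u (v - c • w) = Bf A d u v - c * Bf A d u w := by
  unfold Bf
  have h : ∀ k ∈ Finset.univ, d k * u k * fA A k (v - c • w)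
      = d k * u k * fA A k v - c * (d k * u k * fA A k w) := by
    intro k _
    rw [map_sub, map_smul]
    simp only [smul_eq_mul]
    ring
  rw [Finset.sum_congr rfl h, Finset.sum_sub_distrib, ← Finset.mul_sum]

lemma Bf_sub_left (A : Matrix (Fin n) (Fin n) ℤ) (d : Fin n → ℚ) (u v w : Fin n → ℚ) (c : ℚ) :
    Bf A d (u - c • w) v = Bf A d u v - c * Bf A d w v := by
  unfold Bf
  have h : ∀ k ∈ Finset.univ, d k * (u - c • w) k * fA A k v
      = d k * u k * fA A k v - c * (d k * w k * fA A k v) := by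
    intro k _
    simp only [Pi.sub_apply, Pi.smul_apply, smul_eq_mul]
    ring
  rw [Finset.sum_congr rfl h, Finset.sum_sub_distrib, ← Finset.mul_sum]

lemma Bf_left_ee (A : Matrix (Fin n) (Fin n) ℤ) (d : Fin n → ℚ) (m : Fin n) (v : Fin n → ℚ) :
    Bf A d (ee m) v = d m * fA A m v := by
  unfold Bf
  rw [Finset.sum_eq_single m]
  · simp [ee_apply]
  · intro k _ hk; simp [ee_apply, hk]
  · intro h; exact absurd (Finset.mem_univ m) h

lemma Bf_right_ee (A : Matrix (Fin n) (Fin n) ℤ) (d : Fin n → ℚ)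
    (hdsym : ∀ i j, d i * (A i j : ℚ) = d j * (A j i : ℚ)) (m : Fin n) (u : Fin n → ℚ) :
    Bf A d u (ee m) = d m * fA A m u := by
  unfold Bf
  have h : ∀ k ∈ Finset.univ, d k * u k * fA A k (ee m) = d m * ((A m k : ℚ) * u k) := by
    intro k _
    rw [fA_ee]
    linear_combination u k * hdsym k m
  rw [Finset.sum_congr rfl h, ← Finset.mul_sum]
  rw [fA_apply]

lemma Bf_sig (A : Matrix (Fin n) (Fin n) ℤ) (d : Fin n → ℚ) (h2 : ∀ i, A i i = 2)
    (hdsym : ∀ i j, d i * (A i j : ℚ) = d j * (A j i : ℚ)) (m : Fin n) (u v : Fin n → ℚ) :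
    Bf A d (sig A h2 m u) (sig A h2 m v) = Bf A d u v := by
  rw [sig_apply, sig_apply, Bf_sub_left, Bf_sub_right, Bf_sub_right,
    Bf_right_ee A d hdsym, Bf_left_ee, Bf_left_ee, fA_ee]
  have hmm : ((A m m : ℤ) : ℚ) = 2 := by rw [h2 m]; norm_num
  rw [hmm]
  ring

lemma Bf_weyl (A : Matrix (Fin n) (Fin n) ℤ) (d : Fin n → ℚ) (h2 : ∀ i, A i i = 2)
    (hdsym : ∀ i j, d i * (A i j : ℚ) = d j * (A j i : ℚ)) :
    ∀ g ∈ weylGroup A, ∀ u v, Bf A d (g u) (g v) = Bf A d u v := by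
  intro g hg
  rw [weylGroup_eq A h2] at hg
  induction hg using Subgroup.closure_induction with
  | mem x hx =>
    obtain ⟨m, rfl⟩ := hx
    intro u v
    exact Bf_sig A d h2 hdsym m u v
  | one => intro u v; rfl
  | mul x y hx hy px py =>
    intro u v
    rw [mul_apply', mul_apply', px, py]
  | inv x hx px =>
    intro u v
    have h1 := px (x⁻¹ u) (x⁻¹ v)
    have h2x : x (x⁻¹ u) = u := x.apply_symm_apply u
    have h2y : x (x⁻¹ v) = v := x.apply_symm_apply v
    rw [h2x, h2y] at h1
    exact h1.symm

lemma conj_lemma (A : Matrix (Fin n) (Fin n) ℤ) (d : Fin n → ℚ) (h2 : ∀ i, A i i = 2)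
    (hd0 : ∀ i, d i ≠ 0) (hdsym : ∀ i j, d i * (A i j : ℚ) = d j * (A j i : ℚ))
    {i j : Fin n} {g : (Fin n → ℚ) ≃ₗ[ℚ] (Fin n → ℚ)} (hg : g ∈ weylGroup A)
    (hge : g (ee i) = ee j) :
    g * sig A h2 i * g⁻¹ = sig A h2 j := by
  have hBij := Bf_weyl A d h2 hdsym g hg (ee i) (ee i)
  rw [hge, Bf_left_ee, Bf_left_ee, fA_ee, fA_ee] at hBij
  have hii : ((A i i : ℤ) : ℚ) = 2 := by rw [h2 i]; norm_num
  have hjj : ((A j j : ℤ) : ℚ) = 2 := by rw [h2 j]; norm_num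
  rw [hii, hjj] at hBij
  have hdij : d i = d j := by linarith
  refine LinearEquiv.ext fun v => ?_
  show g ((sig A h2 i) (g⁻¹ v)) = sig A h2 j v
  rw [sig_apply, sig_apply, map_sub, map_smul]
  have hgi : g (g⁻¹ v) = v := g.apply_symm_apply v
  rw [hgi, hge]
  have hc : fA A i (g⁻¹ v) = fA A j v := by
    have h1 := Bf_weyl A d h2 hdsym g hg (ee i) (g⁻¹ v)
    rw [hge, hgi, Bf_left_ee, Bf_left_ee] at h1
    rw [hdij] at h1
    exact (mul_left_cancel₀ (hd0 j) h1).symm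
  rw [hc]

/-! ### the sign character attached to a skeleton component -/

lemma even_mOf {c : ℤ} (hc : c ≠ 1) : Even (mOf c) := by
  unfold mOf
  split_ifs <;> first | omega | decide

open Classical in
lemma chi_lift (A : Matrix (Fin n) (Fin n) ℤ) (hA : IsGCM A)
    (c0 : (skeleton A).ConnectedComponent) :
    CoxeterMatrix.IsLiftable (CM A)
      (fun k => if (skeleton A).connectedComponentMk k = c0 then (-1 : ℤˣ) else 1) := by
  intro k l
  by_cases hkl : k = l
  · subst hkl
    rw [CM_apply_diag, pow_one]
    by_cases h : (skeleton A).connectedComponentMk k = c0 <;> simp [h]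
  · by_cases h1 : (skeleton A).connectedComponentMk k = c0 <;>
      by_cases h2 : (skeleton A).connectedComponentMk l = c0 <;>
      simp only [h1, h2, if_true, if_false]
    · rw [show ((-1 : ℤˣ) * -1) = 1 by norm_num, one_pow]
    · rw [CM_apply_ne A hkl]
      have hprod : A k l * A l k ≠ 1 := by
        intro hone
        have h0 : A k l ≤ 0 := hA.2.1 k l hkl
        rcases Int.mul_eq_one_iff_eq_one_or_neg_one.mp hone with ⟨ha, hb⟩ | ⟨ha, hb⟩
        · omega
        · have hadj : (skeleton A).Adj k l := ⟨hkl, ha, hb⟩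
          have hcc := SimpleGraph.ConnectedComponent.connectedComponentMk_eq_of_adj hadj
          rw [h1] at hcc
          exact h2 hcc.symm
      rw [show ((-1 : ℤˣ) * 1) = -1 by norm_num]
      exact (even_mOf hprod).neg_one_pow
    · rw [CM_apply_ne A hkl]
      have hprod : A k l * A l k ≠ 1 := by
        intro hone
        have h0 : A k l ≤ 0 := hA.2.1 k l hkl
        rcases Int.mul_eq_one_iff_eq_one_or_neg_one.mp hone with ⟨ha, hb⟩ | ⟨ha, hb⟩
        · omega
        · have hadj : (skeleton A).Adj k l := ⟨hkl, ha, hb⟩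
          have hcc := SimpleGraph.ConnectedComponent.connectedComponentMk_eq_of_adj hadj
          rw [h2] at hcc
          exact h1 hcc
      rw [show ((1 : ℤˣ) * -1) = -1 by norm_num]
      exact (even_mOf hprod).neg_one_pow
    · rw [one_mul, one_pow]

/-! ### the main disjointness lemma -/

open Classical in
theorem main_comp (A : Matrix (Fin n) (Fin n) ℤ) (hA : IsGCM A) (hsym : IsSymmetrizable A)
    {i j : Fin n} {g : (Fin n → ℚ) ≃ₗ[ℚ] (Fin n → ℚ)} (hg : g ∈ weylGroup A)
    (hge : g (Pi.single i 1) = Pi.single j 1) :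
    (skeleton A).connectedComponentMk i = (skeleton A).connectedComponentMk j := by
  obtain ⟨d, hd0, hdsym⟩ := hsym
  by_contra hne
  have hge' : g (ee i) = ee j := hge
  have hconj : g * sig A hA.1 i * g⁻¹ = sig A hA.1 j :=
    conj_lemma A d hA.1 hd0 hdsym hg hge'
  obtain ⟨w, hw⟩ := weyl_le_range A hA hg
  have habs : w * (csys A).simple i * w⁻¹ = (csys A).simple j := by
    apply phi_inj A hA
    rw [map_mul, map_mul, map_inv, phi_simple, phi_simple, hw, hconj]
  set fJ : Fin n → ℤˣ :=
    fun k => if (skeleton A).connectedComponentMk k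
      = (skeleton A).connectedComponentMk i then (-1 : ℤˣ) else 1 with hfJ
  set χ := (csys A).lift ⟨fJ, chi_lift A hA ((skeleton A).connectedComponentMk i)⟩ with hχ
  have h1 : χ ((csys A).simple i) = -1 := by
    rw [hχ, (csys A).lift_apply_simple, hfJ]
    simp
  have h2 : χ ((csys A).simple j) = 1 := by
    rw [hχ, (csys A).lift_apply_simple, hfJ]
    have hne' : (skeleton A).connectedComponentMk j ≠ (skeleton A).connectedComponentMk i :=
      fun h => hne h.symm
    simp only [hne', if_false]
  have h3 : χ (w * (csys A).simple i * w⁻¹) = χ ((csys A).simple i) := by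
    rw [map_mul, map_mul, map_inv, mul_comm (χ w) _, mul_assoc, mul_inv_cancel, mul_one]
  rw [habs, h2, h1] at h3
  exact absurd h3 (by norm_num)

end RRD

/-- The set of real roots `Φ = ⋃ i, W·e i` decomposes as the disjoint union, over the
connected components `J` of the simply laced skeleton, of the sets `⋃_{j ∈ J} W·e j`. -/
theorem real_roots_orbit_decomposition {n : ℕ} (A : Matrix (Fin n) (Fin n) ℤ)
    (hA : IsGCM A) (hsym : IsSymmetrizable A) :
    (Set.univ : Set (skeleton A).ConnectedComponent).PairwiseDisjoint
      (fun c => ⋃ i ∈ c.supp, weylOrbit A i) ∧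
    (⋃ c : (skeleton A).ConnectedComponent, ⋃ i ∈ c.supp, weylOrbit A i) =
      ⋃ i, weylOrbit A i := by
  constructor
  · intro c _ c' _ hcc
    refine Set.disjoint_left.mpr ?_
    rintro v hv hv'
    simp only [Set.mem_iUnion, weylOrbit, Set.mem_setOf_eq] at hv hv'
    obtain ⟨i, hic, w, hwm, hwv⟩ := hv
    obtain ⟨j, hjc, w', hw'm, hw'v⟩ := hv'
    have hg : (w'⁻¹ * w) ∈ weylGroup A := mul_mem (inv_mem hw'm) hwm
    have hge : (w'⁻¹ * w) (Pi.single i 1) = Pi.single j 1 := by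
      rw [RRD.mul_apply', hwv, ← hw'v]
      exact w'.symm_apply_apply _
    have hcomp := RRD.main_comp A hA hsym hg hge
    rw [SimpleGraph.ConnectedComponent.mem_supp_iff] at hic hjc
    exact hcc (by rw [← hic, ← hjc, hcomp])
  · apply le_antisymm
    · intro v hv
      simp only [Set.mem_iUnion] at hv ⊢
      obtain ⟨c, i, _, h⟩ := hv
      exact ⟨i, h⟩
    · intro v hv
      simp only [Set.mem_iUnion] at hv ⊢
      obtain ⟨i, h⟩ := hv
      exact ⟨(skeleton A).connectedComponentMk i, i,
        (SimpleGraph.ConnectedComponent.mem_supp_iff _ _).mpr rfl, h⟩
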